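/- Let G be a connected simple graph on V, s ∈ V a designated source, and D ⊆ V. Suppose there exist nonnegative reals y_{ij}, y_{ji} for each edge {i,j} ∈ E(G) satisfying: (flow conservation) for every i ≠ s, the net inflow Σ_{j ∈ N_i} (y_{ji} − y_{ij}) equals 1; and (capacity) y_{ij} + y_{ji} = 0 whenever i ∉ D and j ∉ D. Then the spanning subgraph (V, I_D(E)) with edges of G incident to D is connected, i.e., D is a relaxed connected dominating set of G. -/

import Mathlib

open SimpleGraph

variable {V : Type*}

/-- Spanning subgraph of `G` whose edges are the edges of `G` with at least one
endpoint in `D` (edge set `I_D(E)`). -/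
def incSub (G : SimpleGraph V) (D : Set V) : SimpleGraph V where
  Adj u v := G.Adj u v ∧ (u ∈ D ∨ v ∈ D)
  symm := ⟨fun u v h => ⟨h.1.symm, h.2.symm⟩⟩
  loopless := ⟨fun v h => G.loopless.1 v h.1⟩

/-- `D` is a dominating set of `G`. -/
def Dominating (G : SimpleGraph V) (D : Set V) : Prop :=
  ∀ v : V, v ∈ D ∨ ∃ u ∈ D, G.Adj v u

/-- Any two members of `D` are joined by a walk in `G` such that whenever
`i_s, i_t ∈ D`, `s < t`, and no vertex strictly between them lies in `D`,
it holds that `t = s + 2`. -/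
def RelaxedConnEq (G : SimpleGraph V) (D : Set V) : Prop :=
  ∀ i ∈ D, ∀ j ∈ D, ∃ (p : ℕ) (f : ℕ → V), f 0 = i ∧ f p = j ∧
    (∀ k, k < p → G.Adj (f k) (f (k + 1))) ∧
    (∀ s t, s < t → t ≤ p → f s ∈ D → f t ∈ D →
      (∀ k, s < k → k < t → f k ∉ D) → t = s + 2)

/-- Any two members of `D` are joined by a walk in `G` on which between any two
consecutive members of `D` there is at most one vertex not in `D`. -/
def RelaxedConnLe (G : SimpleGraph V) (D : Set V) : Prop :=
  ∀ i ∈ D, ∀ j ∈ D, ∃ (p : ℕ) (f : ℕ → V), f 0 = i ∧ f p = j ∧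
    (∀ k, k < p → G.Adj (f k) (f (k + 1))) ∧
    (∀ s t, s < t → t ≤ p → f s ∈ D → f t ∈ D →
      (∀ k, s < k → k < t → f k ∉ D) → t ≤ s + 2)

theorem stmt_19 [Fintype V] [Nonempty V] [DecidableEq V] (G : SimpleGraph V)
    [DecidableRel G.Adj] (hG : G.Connected) (s : V) (D : Set V) (y : V → V → ℝ)
    (hnonneg : ∀ i j : V, 0 ≤ y i j)
    (hflow : ∀ i : V, i ≠ s →
      ∑ j ∈ G.neighborFinset i, (y j i - y i j) = 1)
    (hcap : ∀ i j : V, G.Adj i j → i ∉ D → j ∉ D → y i j + y j i = 0) :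
    (incSub G D).Connected := by

  classical
  rw [SimpleGraph.connected_iff_exists_forall_reachable]
  refine ⟨s, fun v => ?_⟩
  by_contra hv
  set S : Finset V := Finset.univ.filter (fun u => ¬ (incSub G D).Reachable s u) with hS
  have hvS : v ∈ S := by simp [hS, hv]
  have hsS : s ∉ S := by simp only [hS, Finset.mem_filter, not_and, not_not]; exact fun _ => Reachable.refl s
  set g : V → V → ℝ := fun i j => if G.Adj i j then y j i - y i j else 0 with hg
  have hganti : ∀ i j, g i j = - g j i := by
    intro i j
    simp only [hg]
    by_cases h : G.Adj i j
    · simp only [h, h.symm, if_true]; ring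
    · have h' : ¬ G.Adj j i := fun h' => h h'.symm
      simp [h, h']
  have hrow : ∀ i : V, i ≠ s → ∑ j, g i j = 1 := by
    intro i hi
    have : ∑ j, g i j = ∑ j ∈ G.neighborFinset i, (y j i - y i j) := by
      rw [neighborFinset_eq_filter, Finset.sum_filter]
    rw [this, hflow i hi]
  have hsum : ∑ i ∈ S, ∑ j, g i j = (S.card : ℝ) := by
    rw [Finset.sum_congr rfl (fun i hiS => hrow i (fun h => hsS (h ▸ hiS)))]
    simp
  have hsplit : ∀ i : V, ∑ j, g i j = ∑ j ∈ S, g i j + ∑ j ∈ Sᶜ, g i j := by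
    intro i; rw [Finset.sum_add_sum_compl]
  have hSS : ∑ i ∈ S, ∑ j ∈ S, g i j = 0 := by
    have h1 : ∑ i ∈ S, ∑ j ∈ S, g i j = - ∑ i ∈ S, ∑ j ∈ S, g j i := by
      rw [← Finset.sum_neg_distrib]
      refine Finset.sum_congr rfl fun i _ => ?_
      rw [← Finset.sum_neg_distrib]
      exact Finset.sum_congr rfl fun j _ => hganti i j
    have h2 : ∑ i ∈ S, ∑ j ∈ S, g j i = ∑ i ∈ S, ∑ j ∈ S, g i j := Finset.sum_comm
    linarith
  have hcross : (0 : ℝ) < ∑ i ∈ S, ∑ j ∈ Sᶜ, g i j := by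
    have : ∑ i ∈ S, (∑ j ∈ S, g i j + ∑ j ∈ Sᶜ, g i j) = (S.card : ℝ) := by
      rw [← Finset.sum_congr rfl (fun i _ => hsplit i)]; exact hsum
    rw [Finset.sum_add_distrib, hSS, zero_add] at this
    rw [this]
    have : 0 < S.card := Finset.card_pos.mpr ⟨v, hvS⟩
    exact_mod_cast this
  have hex : ∃ i ∈ S, ∃ j ∈ Sᶜ, 0 < g i j := by
    by_contra hno
    push_neg at hno
    have : ∑ i ∈ S, ∑ j ∈ Sᶜ, g i j ≤ 0 := by
      refine Finset.sum_nonpos fun i hi => Finset.sum_nonpos fun j hj => hno i hi j hj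
    linarith
  obtain ⟨i, hiS, j, hjS, hgij⟩ := hex
  have hadj : G.Adj i j := by
    by_contra h
    simp [hg, h] at hgij
  have hyji : 0 < y j i := by
    have : g i j = y j i - y i j := by simp [hg, hadj]
    have := hnonneg i j
    nlinarith [hgij, this]
  have hD : i ∈ D ∨ j ∈ D := by
    by_contra h
    push_neg at h
    have h0 := hcap i j hadj h.1 h.2
    have := hnonneg i j
    linarith
  have hjreach : (incSub G D).Reachable s j := by
    simpa [hS] using hjS
  have hireach : (incSub G D).Reachable s i :=
    hjreach.trans (SimpleGraph.Adj.reachable (by exact ⟨hadj.symm, hD.symm⟩ : (incSub G D).Adj j i))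
  have : i ∉ S := by simp [hS, hireach]
  exact this hiS
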